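/- Let d ≥ 1, 0 ≤ α < d, and let x₀,…,x_k be distinct reals. For any target polynomial q(x) of degree ≤ d, the set of tuples (d₀,…,d_k) of polynomials of degree ≤ d−α−1 with ∑_{t=0}^k d_t(x)(x − x_t)^(α+1) = q(x) is an affine subspace of dimension max(0, (k+1)(d−α) − (d+1)), provided it is nonempty; and it is nonempty whenever (k+1)(d−α) ≥ d+1. -/

import Mathlib

open Polynomial

/-- The conformality map along an l-edge: a tuple of cofactors `(d_t)`, each of
degree `< d − α` (i.e. at most `d − α − 1`), is sent to
`∑_t d_t(x)·(x − x_t)^(α+1)`. -/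
noncomputable def confMap (k d α : ℕ) (x : Fin (k + 1) → ℝ) :
    (Fin (k + 1) → Polynomial.degreeLT ℝ (d - α)) →ₗ[ℝ] ℝ[X] where
  toFun D := ∑ t, (D t : ℝ[X]) * (X - C (x t)) ^ (α + 1)
  map_add' D E := by simp [add_mul, Finset.sum_add_distrib]
  map_smul' c D := by simp [Finset.smul_sum, smul_mul_assoc]

namespace ConfAux


noncomputable def gmap (k N m : ℕ) (x : Fin (k + 1) → ℝ) :
    (Fin (k + 1) → Polynomial.degreeLT ℝ m) →ₗ[ℝ] ℝ[X] where
  toFun D := ∑ t, (D t : ℝ[X]) * (X - C (x t)) ^ N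
  map_add' D E := by simp [add_mul, Finset.sum_add_distrib]
  map_smul' c D := by simp [Finset.smul_sum, smul_mul_assoc]

lemma gmap_apply (k N m : ℕ) (x : Fin (k+1) → ℝ) (D) :
    gmap k N m x D = ∑ t, (D t : ℝ[X]) * (X - C (x t)) ^ N := rfl

-- degreeLT helpers
lemma natDegree_le_of_mem_degreeLT {m : ℕ} {p : ℝ[X]} (hp : p ∈ degreeLT ℝ m) :
    p.natDegree ≤ m - 1 := by
  rcases eq_or_ne p 0 with rfl | h
  · simp
  · rw [Polynomial.mem_degreeLT] at hp
    have := (Polynomial.natDegree_lt_iff_degree_lt h).mpr hp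
    omega

lemma mem_degreeLT_of_natDegree_le {m : ℕ} (hm : 1 ≤ m) {p : ℝ[X]}
    (h : p.natDegree ≤ m - 1) : p ∈ degreeLT ℝ m := by
  rw [Polynomial.mem_degreeLT]
  calc p.degree ≤ (p.natDegree : WithBot ℕ) := degree_le_natDegree
  _ ≤ ((m - 1 : ℕ) : WithBot ℕ) := by exact_mod_cast h
  _ < (m : WithBot ℕ) := by exact_mod_cast Nat.sub_lt hm one_pos

-- reflect helpers
lemma reflect_reflect (N : ℕ) (p : ℝ[X]) : reflect N (reflect N p) = p := by
  ext i
  simp [coeff_reflect, revAt_invol]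

lemma reflect_smul (N : ℕ) (c : ℝ) (p : ℝ[X]) :
    reflect N (c • p) = c • reflect N p := by
  ext i
  simp [coeff_reflect, Polynomial.coeff_smul]

noncomputable def reflectL (N : ℕ) : ℝ[X] →ₗ[ℝ] ℝ[X] where
  toFun := reflect N
  map_add' p q := reflect_add p q N
  map_smul' c p := reflect_smul N c p

@[simp] lemma reflectL_apply (N : ℕ) (p : ℝ[X]) : reflectL N p = reflect N p := rfl

lemma natDegree_reflect_le {N : ℕ} {p : ℝ[X]} (h : p.natDegree ≤ N) :
    (reflect N p).natDegree ≤ N := by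
  apply natDegree_le_iff_coeff_eq_zero.mpr
  intro i hi
  rw [coeff_reflect, revAt_eq_self_of_lt hi]
  exact coeff_eq_zero_of_natDegree_lt (lt_of_le_of_lt h hi)

lemma reflect_one_X_sub_C (c : ℝ) : reflect 1 (X - C c) = 1 - C c * X := by
  have h : (X : ℝ[X]) - C c = C (-c) + X := by rw [map_neg]; ring
  rw [h, reflect_add, reflect_C, ← pow_one (X : ℝ[X]), reflect_monomial]
  have h1 : revAt 1 1 = 0 := by rw [revAt_le (le_refl 1)]
  rw [h1, pow_zero, map_neg]
  ring

lemma reflect_X_sub_C_pow (c : ℝ) (N : ℕ) :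
    reflect N ((X - C c) ^ N) = (1 - C c * X) ^ N := by
  induction N with
  | zero => simpa using reflect_one 0
  | succ n ih =>
    have h1 : ((X : ℝ[X]) - C c).natDegree ≤ 1 := by
      simpa using natDegree_X_sub_C (c := c) ▸ le_refl 1
    have h2 : (((X : ℝ[X]) - C c) ^ n).natDegree ≤ n := natDegree_pow_le.trans (by
      simp [natDegree_X_sub_C])
    calc reflect (n + 1) ((X - C c) ^ (n+1))
        = reflect (1 + n) ((X - C c) * (X - C c) ^ n) := by rw [add_comm 1 n, pow_succ']
      _ = reflect 1 (X - C c) * reflect n ((X - C c) ^ n) := reflect_mul _ _ h1 h2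
      _ = (1 - C c * X) ^ (n+1) := by rw [reflect_one_X_sub_C, ih, pow_succ']



/-- one derivative step numerator -/
noncomputable def stp (c : ℝ) (p : ℕ) (A : ℝ[X]) : ℝ[X] :=
  derivative A * (1 - C c * X) - C ((p : ℝ) * c) * A

lemma stp_spec (c : ℝ) (p : ℕ) (hp : 1 ≤ p) (A : ℝ[X]) :
    derivative (A * (1 - C c * X) ^ p) = stp c p A * (1 - C c * X) ^ (p - 1) := by
  obtain ⟨p', rfl⟩ : ∃ p', p = p' + 1 := ⟨p - 1, by omega⟩
  have h1 : derivative ((1 : ℝ[X]) - C c * X) = - C c := by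
    simp [derivative_sub, derivative_one, derivative_C_mul]
  rw [derivative_mul, derivative_pow, h1, stp, Nat.add_sub_cancel, pow_succ]
  rw [map_mul]
  ring

lemma natDegree_stp_le (c : ℝ) (p : ℕ) (A : ℝ[X]) :
    (stp c p A).natDegree ≤ A.natDegree := by
  rcases eq_or_ne (derivative A) 0 with h | h
  · rw [stp, h, zero_mul, zero_sub]
    exact (natDegree_neg _).le.trans (natDegree_C_mul_le _ _)
  · have hA1 : 1 ≤ A.natDegree := by
      by_contra hc
      push_neg at hc
      interval_cases hA : A.natDegree
      · exact h (derivative_of_natDegree_zero hA)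
    refine (natDegree_sub_le _ _).trans (max_le ?_ ?_)
    · refine (natDegree_mul_le).trans ?_
      have h2 : (derivative A).natDegree ≤ A.natDegree - 1 := natDegree_derivative_le A
      have h3 : ((1 : ℝ[X]) - C c * X).natDegree ≤ 1 := by
        refine (natDegree_sub_le _ _).trans (max_le (by simp) ?_)
        exact (natDegree_C_mul_le _ _).trans natDegree_X_le
      omega
    · exact natDegree_C_mul_le _ _

lemma stp_eq_zero (c : ℝ) (hc : c ≠ 0) (p : ℕ) (hp : 1 ≤ p) (A : ℝ[X]) :
    stp c p A = 0 → A = 0 := by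
  intro h
  by_contra hA
  have hcoeff : (stp c p A).coeff A.natDegree
      = -(c * (A.natDegree + p)) * A.coeff A.natDegree := by
    rw [stp, coeff_sub, coeff_C_mul]
    have h1 : (derivative A * (1 - C c * X)).coeff A.natDegree
        = (derivative A).coeff A.natDegree - c * ((derivative A) * X).coeff A.natDegree := by
      rw [mul_sub, mul_one, coeff_sub, ← mul_assoc]
      rw [mul_comm (derivative A) (C c), mul_assoc, coeff_C_mul]
    have h2 : (derivative A).coeff A.natDegree = 0 := by
      rw [coeff_derivative, coeff_natDegree_succ_eq_zero, zero_mul]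
    have h3 : ((derivative A) * X).coeff A.natDegree
        = A.natDegree * A.coeff A.natDegree := by
      cases hAe : A.natDegree with
      | zero => simp
      | succ e' =>
        rw [coeff_mul_X, coeff_derivative]
        push_cast
        ring
    rw [h1, h2, h3]
    push_cast
    ring
  rw [h, coeff_zero] at hcoeff
  have h4 : A.coeff A.natDegree ≠ 0 := mt leadingCoeff_eq_zero.mp hA
  have hep : ((A.natDegree : ℝ) + p) ≠ 0 := by
    have h6 : (1:ℝ) ≤ (p:ℝ) := by exact_mod_cast hp
    have h7 : (0:ℝ) ≤ (A.natDegree : ℝ) := Nat.cast_nonneg _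
    linarith [h6, h7]
  exact (mul_ne_zero (neg_ne_zero.mpr (mul_ne_zero hc hep)) h4) hcoeff.symm




noncomputable def stpL (c : ℝ) (p : ℕ) : ℝ[X] →ₗ[ℝ] ℝ[X] where
  toFun := stp c p
  map_add' A B := by simp only [stp, derivative_add, add_mul, mul_add]; ring
  map_smul' r A := by
    simp only [stp, derivative_smul, RingHom.id_apply, smul_sub, smul_mul_assoc,
      mul_smul_comm]

@[simp] lemma stpL_apply (c : ℝ) (p : ℕ) (A : ℝ[X]) : stpL c p A = stp c p A := rfl

noncomputable def phiIter (c : ℝ) (p : ℕ) : ℕ → ℝ[X] →ₗ[ℝ] ℝ[X]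
  | 0 => LinearMap.id
  | (j+1) => (stpL c (p - j)).comp (phiIter c p j)



lemma phiIter_spec (c : ℝ) (p j : ℕ) (hj : j ≤ p) (A : ℝ[X]) :
    derivative^[j] (A * (1 - C c * X) ^ p) = phiIter c p j A * (1 - C c * X) ^ (p - j) := by
  induction j with
  | zero => simp [phiIter]
  | succ j ih =>
    rw [Function.iterate_succ_apply', ih (by omega)]
    have h1 : 1 ≤ p - j := by omega
    rw [stp_spec c (p - j) h1 (phiIter c p j A)]
    have h2 : p - j - 1 = p - (j + 1) := by omega
    rw [h2]
    rfl

lemma stp_spec' (c : ℝ) (p : ℕ) (hp : 1 ≤ p) (A : ℝ[X]) :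
    derivative (A * (1 - C c * X) ^ p) = stp c p A * (1 - C c * X) ^ (p - 1) :=
  stp_spec c p hp A

lemma phiIter_natDegree_le (c : ℝ) (p j : ℕ) (A : ℝ[X]) :
    (phiIter c p j A).natDegree ≤ A.natDegree := by
  induction j with
  | zero => simp [phiIter]
  | succ j ih => exact le_trans (natDegree_stp_le _ _ _) ih

lemma phiIter_eq_zero (c : ℝ) (hc : c ≠ 0) (p j : ℕ) (hj : j ≤ p) (A : ℝ[X]) :
    phiIter c p j A = 0 → A = 0 := by
  induction j with
  | zero => simp [phiIter]
  | succ j ih =>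
    intro h
    exact ih (by omega) (stp_eq_zero c hc (p - j) (by omega) _ h)


-- finrank facts
instance dLTfin (n : ℕ) : Module.Finite ℝ (degreeLT ℝ n) :=
  Module.Finite.equiv (degreeLTEquiv ℝ n).symm

lemma finrank_degreeLT (n : ℕ) : Module.finrank ℝ (degreeLT ℝ n) = n := by
  rw [(degreeLTEquiv ℝ n).finrank_eq]
  simp [Module.finrank_pi]

lemma finrank_domain (k m : ℕ) :
    Module.finrank ℝ (Fin (k+1) → degreeLT ℝ m) = (k+1) * m := by
  rw [Module.finrank_pi_fintype]
  simp [finrank_degreeLT, Finset.sum_const, mul_comm]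

lemma gmap_single (k N m : ℕ) (x : Fin (k+1) → ℝ) (i : Fin (k+1))
    (p : degreeLT ℝ m) :
    gmap k N m x (Pi.single i p) = (p : ℝ[X]) * (X - C (x i)) ^ N := by
  rw [gmap_apply, Finset.sum_eq_single i]
  · simp
  · intro t _ ht
    rw [Pi.single_eq_of_ne ht]
    simp
  · simp

lemma range_gmap_le (k N m : ℕ) (hm : 1 ≤ m) (x : Fin (k+1) → ℝ) :
    LinearMap.range (gmap k N m x) ≤ degreeLT ℝ (N + m) := by
  rintro _ ⟨D, rfl⟩
  rw [gmap_apply]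
  apply Submodule.sum_mem
  intro t _
  apply mem_degreeLT_of_natDegree_le (by omega)
  refine natDegree_mul_le.trans ?_
  have h1 : (D t : ℝ[X]).natDegree ≤ m - 1 := natDegree_le_of_mem_degreeLT (D t).2
  have h2 : ((X - C (x t)) ^ N).natDegree ≤ N :=
    natDegree_pow_le.trans (by simp [natDegree_X_sub_C])
  omega

lemma finrank_ker_ge (k N m : ℕ) (hm : 1 ≤ m) (x : Fin (k+1) → ℝ) :
    (k+1) * m ≤ Module.finrank ℝ (LinearMap.ker (gmap k N m x)) + (N + m) := by
  have h1 := LinearMap.finrank_range_add_finrank_ker (gmap k N m x)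
  rw [finrank_domain] at h1
  have h2 : Module.finrank ℝ (LinearMap.range (gmap k N m x)) ≤ N + m := by
    have := Submodule.finrank_mono (range_gmap_le k N m hm x)
    simpa [finrank_degreeLT] using this
  omega

lemma one_sub_C_mul_X (c : ℝ) (hc : c ≠ 0) :
    (1 : ℝ[X]) - C c * X = C (-c) * (X - C c⁻¹) := by
  have h : C c * C c⁻¹ = (1 : ℝ[X]) := by rw [← map_mul, mul_inv_cancel₀ hc, map_one]
  rw [map_neg]
  linear_combination -h

lemma bezout_surj (k N m : ℕ) (hm : 1 ≤ m) (hNm : N ≤ m) (hk : 1 ≤ k)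
    (x : Fin (k+1) → ℝ) (hx : Function.Injective x) :
    degreeLT ℝ (N + m) ≤ LinearMap.range (gmap k N m x) := by
  intro q hq
  rw [mem_degreeLT] at hq
  have h1k : 1 < k + 1 := by omega
  set i1 : Fin (k+1) := ⟨1, h1k⟩ with hi1
  have hne : x 0 ≠ x i1 := by
    intro h
    have := hx h
    rw [Fin.ext_iff] at this
    simp [hi1] at this
  set f : ℝ[X] := (X - C (x 0)) ^ N with hf_def
  set g : ℝ[X] := (X - C (x i1)) ^ N with hg_def
  have hf : f.Monic := (monic_X_sub_C (x 0)).pow N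
  have hdegf : f.degree = (N : WithBot ℕ) := by
    rw [hf_def, degree_pow, degree_X_sub_C]; simp
  have hdegg : g.degree = (N : WithBot ℕ) := by
    rw [hg_def, degree_pow, degree_X_sub_C]; simp
  have hcop : IsCoprime f g :=
    (isCoprime_X_sub_C_of_isUnit_sub ((sub_ne_zero.mpr hne).isUnit)).pow
  obtain ⟨u, v, huv⟩ := hcop
  set b : ℝ[X] := (q * v) %ₘ f with hb_def
  have hmod : b = q * v - f * ((q * v) /ₘ f) := by
    have h := modByMonic_add_div (q * v) f
    linear_combination h
  set a : ℝ[X] := q * u + ((q * v) /ₘ f) * g with ha_def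
  have key : q = a * f + b * g := by
    rw [ha_def, hmod]
    linear_combination (-(q : ℝ[X])) * huv
  have hbdeg : b.degree < (N : WithBot ℕ) := hdegf ▸ degree_modByMonic_lt _ hf
  have hbg : (b * g).degree < ((N + m : ℕ) : WithBot ℕ) := by
    refine (degree_mul_le _ _).trans_lt ?_
    rw [hdegg]
    calc b.degree + (N : WithBot ℕ) < (N : WithBot ℕ) + (N : WithBot ℕ) :=
          WithBot.add_lt_add_right (by simp) hbdeg
      _ ≤ ((N + m : ℕ) : WithBot ℕ) := by
          rw [← Nat.cast_add]
          exact_mod_cast by omega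
  have hadeg : a.degree < (m : WithBot ℕ) := by
    rcases eq_or_ne a 0 with h | h
    · simp [h]
    · have haf : (a * f).degree = a.degree + (N : WithBot ℕ) := by
        rw [degree_mul, hdegf]
      have hafq : a * f = q - b * g := by linear_combination -key
      have : (a * f).degree < ((N + m : ℕ) : WithBot ℕ) := by
        rw [hafq]
        exact (degree_sub_le _ _).trans_lt (max_lt hq hbg)
      rw [haf] at this
      have hcast : ((N + m : ℕ) : WithBot ℕ) = (m : WithBot ℕ) + (N : WithBot ℕ) := by
        rw [← Nat.cast_add]
        norm_cast
        omega
      rw [hcast] at this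
      exact lt_of_add_lt_add_right this
  have hamem : a ∈ degreeLT ℝ m := mem_degreeLT.mpr hadeg
  have hbmem : b ∈ degreeLT ℝ m := by
    rw [mem_degreeLT]
    exact hbdeg.trans_le (by exact_mod_cast hNm)
  refine ⟨Pi.single 0 ⟨a, hamem⟩ + Pi.single i1 ⟨b, hbmem⟩, ?_⟩
  rw [map_add, gmap_single, gmap_single]
  exact key.symm

section Transform

variable (j N m : ℕ) (x : Fin (j+2) → ℝ)

/-- shifted-inverted nodes -/
noncomputable def zz : Fin (j+1) → ℝ := fun t => (x t.succ - x 0)⁻¹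

noncomputable def theta (t : Fin (j+1)) : ℝ[X] →ₗ[ℝ] ℝ[X] :=
  ((-(x t.succ - x 0)) ^ (N - m)) •
    ((phiIter (x t.succ - x 0) N m).comp ((reflectL (m-1)).comp (taylor (x 0))))

lemma theta_apply (t : Fin (j+1)) (a : ℝ[X]) :
    theta j N m x t a =
      ((-(x t.succ - x 0)) ^ (N - m)) •
        phiIter (x t.succ - x 0) N m (reflect (m-1) (taylor (x 0) a)) := rfl

lemma theta_mem (hm : 1 ≤ m) (t : Fin (j+1)) (a : ℝ[X]) (ha : a ∈ degreeLT ℝ m) :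
    theta j N m x t a ∈ degreeLT ℝ m := by
  rw [theta_apply]
  apply mem_degreeLT_of_natDegree_le hm
  refine (natDegree_smul_le _ _).trans ?_
  refine (phiIter_natDegree_le _ _ _ _).trans ?_
  refine (natDegree_reflect_le ?_).trans (le_refl _)
  rw [natDegree_taylor]
  exact natDegree_le_of_mem_degreeLT ha

noncomputable def T0 (hm : 1 ≤ m) :
    (Fin (j+2) → degreeLT ℝ m) →ₗ[ℝ] (Fin (j+1) → degreeLT ℝ m) :=
  LinearMap.pi (fun t => LinearMap.codRestrict (degreeLT ℝ m)
    ((theta j N m x t).comp ((Submodule.subtype _).comp (LinearMap.proj t.succ)))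
    (fun a => theta_mem j N m x hm t _ (a t.succ).2))

lemma T0_apply (hm : 1 ≤ m) (a : Fin (j+2) → degreeLT ℝ m) (t : Fin (j+1)) :
    ((T0 j N m x hm a t : ℝ[X])) = theta j N m x t (a t.succ : ℝ[X]) := rfl

variable {j N m x}

lemma hc_ne (hx : Function.Injective x) (t : Fin (j+1)) : x t.succ - x 0 ≠ 0 :=
  sub_ne_zero.mpr (fun h => Fin.succ_ne_zero t (hx h))

lemma zz_inj (hx : Function.Injective x) : Function.Injective (zz j x) := by
  intro s t h
  have h2 : x s.succ - x 0 = x t.succ - x 0 :=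
    inv_injective h
  have h3 : x s.succ = x t.succ := by linarith
  exact Fin.succ_injective _ (hx h3)

lemma taylor_X_sub_C_pow (r c : ℝ) (n : ℕ) :
    taylor r ((X - C c) ^ n) = (X - C (c - r)) ^ n := by
  rw [taylor_apply, pow_comp, sub_comp, X_comp, C_comp]
  congr 1
  rw [map_sub]
  ring

lemma transform_ker (hm : 1 ≤ m) (hNm : m ≤ N) (hx : Function.Injective x)
    (a : Fin (j+2) → degreeLT ℝ m) (ha : gmap (j+1) N m x a = 0) :
    gmap j (N-m) m (zz j x) (T0 j N m x hm a) = 0 := by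
  rw [gmap_apply] at ha
  -- Step A : recentre at x 0
  have hA : ∑ t : Fin (j+2),
      (taylor (x 0) (a t : ℝ[X])) * (X - C (x t - x 0)) ^ N = 0 := by
    have h := congrArg (taylor (x 0)) ha
    rw [map_sum, map_zero] at h
    rw [← h]
    apply Finset.sum_congr rfl
    intro t _
    rw [taylor_mul, taylor_X_sub_C_pow]
  -- Step B : reflect
  have hB : ∑ t : Fin (j+2),
      reflect (m-1) (taylor (x 0) (a t : ℝ[X])) * (1 - C (x t - x 0) * X) ^ N = 0 := by
    have h := congrArg (reflectL ((m-1) + N)) hA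
    rw [map_sum, map_zero] at h
    rw [← h]
    apply Finset.sum_congr rfl
    intro t _
    have hd1 : (taylor (x 0) (a t : ℝ[X])).natDegree ≤ m - 1 := by
      rw [natDegree_taylor]
      exact natDegree_le_of_mem_degreeLT (a t).2
    have hd2 : (((X : ℝ[X]) - C (x t - x 0)) ^ N).natDegree ≤ N := by
      refine natDegree_pow_le.trans ?_
      rw [natDegree_X_sub_C, mul_one]
    rw [reflectL_apply, reflect_mul _ _ hd1 hd2, reflect_X_sub_C_pow]
  -- Step C : differentiate m times
  have hC : ∑ t : Fin (j+1),
      phiIter (x t.succ - x 0) N m (reflect (m-1) (taylor (x 0) (a t.succ : ℝ[X]))) *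
        (1 - C (x t.succ - x 0) * X) ^ (N - m) = 0 := by
    have h := congrArg (fun p : ℝ[X] => derivative^[m] p) hB
    rw [iterate_derivative_sum, Fin.sum_univ_succ] at h
    have hhead : derivative^[m]
        (reflect (m-1) (taylor (x 0) (a 0 : ℝ[X])) * (1 - C (x 0 - x 0) * X) ^ N) = 0 := by
      rw [sub_self, map_zero, zero_mul, sub_zero, one_pow, mul_one]
      apply iterate_derivative_eq_zero
      have hd : (reflect (m-1) (taylor (x 0) (a 0 : ℝ[X]))).natDegree ≤ m - 1 := by
        apply natDegree_reflect_le
        rw [natDegree_taylor]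
        exact natDegree_le_of_mem_degreeLT (a 0).2
      omega
    rw [hhead, iterate_derivative_zero, zero_add] at h
    rw [← h]
    apply Finset.sum_congr rfl
    intro t _
    exact (phiIter_spec (x t.succ - x 0) N m hNm _).symm
  -- Step D : back to polynomial form
  rw [gmap_apply]
  rw [← hC]
  apply Finset.sum_congr rfl
  intro t _
  rw [T0_apply, theta_apply]
  have hc := hc_ne hx t
  rw [smul_eq_C_mul]
  have hpow : ((1 : ℝ[X]) - C (x t.succ - x 0) * X) ^ (N - m) =
      C ((-(x t.succ - x 0)) ^ (N - m)) * (X - C (zz j x t)) ^ (N - m) := by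
    rw [one_sub_C_mul_X _ hc, mul_pow, ← map_pow]
    rfl
  rw [hpow]
  ring

lemma transform_inj (hm : 1 ≤ m) (hNm : m ≤ N) (hx : Function.Injective x)
    (a : Fin (j+2) → degreeLT ℝ m) (ha : gmap (j+1) N m x a = 0)
    (h0 : T0 j N m x hm a = 0) : a = 0 := by
  have hcomp : ∀ t : Fin (j+1), (a t.succ : ℝ[X]) = 0 := by
    intro t
    have h1 : ((T0 j N m x hm a t : ℝ[X])) = 0 := by
      rw [h0]
      rfl
    rw [T0_apply, theta_apply] at h1
    have hc := hc_ne hx t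
    have hcne : (-(x t.succ - x 0)) ^ (N - m) ≠ 0 :=
      pow_ne_zero _ (neg_ne_zero.mpr hc)
    have h2 := (smul_eq_zero.mp h1).resolve_left hcne
    have h3 := phiIter_eq_zero _ hc N m hNm _ h2
    have h4 := congrArg (reflect (m-1)) h3
    rw [reflect_reflect] at h4
    have h5 := congrArg (taylor (-(x 0))) h4
    rw [taylor_taylor] at h5
    rw [neg_add_cancel, taylor_zero] at h5
    simpa using h5
  have hzero : (a 0 : ℝ[X]) = 0 := by
    rw [gmap_apply, Fin.sum_univ_succ] at ha
    have htail : ∑ t : Fin (j+1), (a t.succ : ℝ[X]) * (X - C (x t.succ)) ^ N = 0 :=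
      Finset.sum_eq_zero (fun t _ => by rw [hcomp t, zero_mul])
    rw [htail, add_zero] at ha
    have hne : ((X : ℝ[X]) - C (x 0)) ^ N ≠ 0 := pow_ne_zero _ (X_sub_C_ne_zero (x 0))
    exact (mul_eq_zero.mp ha).resolve_right hne
  funext t
  refine Fin.cases ?_ ?_ t
  · exact Subtype.ext hzero
  · intro s
    exact Subtype.ext (hcomp s)

lemma ker_shrink (hm : 1 ≤ m) (hNm : m ≤ N) (hx : Function.Injective x) :
    Module.finrank ℝ (LinearMap.ker (gmap (j+1) N m x)) ≤
      Module.finrank ℝ (LinearMap.ker (gmap j (N-m) m (zz j x))) := by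
  have hrestrict : ∀ a ∈ LinearMap.ker (gmap (j+1) N m x),
      T0 j N m x hm a ∈ LinearMap.ker (gmap j (N-m) m (zz j x)) := by
    intro a ha
    rw [LinearMap.mem_ker] at ha ⊢
    exact transform_ker hm hNm hx a ha
  let T := (T0 j N m x hm).restrict hrestrict
  have hTinj : Function.Injective T := by
    have hT0 : ∀ a : LinearMap.ker (gmap (j+1) N m x), T a = 0 → a = 0 := by
      intro a haT
      have h1 : T0 j N m x hm (a : Fin (j+2) → degreeLT ℝ m) = 0 := by
        have := congrArg (Subtype.val) haT
        exact this
      have h2 := transform_inj hm hNm hx a (LinearMap.mem_ker.mp a.2) h1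
      exact Subtype.ext h2
    intro a b hab
    have h1 : T (a - b) = 0 := by
      have h2 : T (a - b) = T a - T b := map_sub T a b
      rw [h2, hab]
      exact sub_self (T b)
    exact sub_eq_zero.mp (hT0 _ h1)
  exact LinearMap.finrank_le_finrank_of_injective hTinj

end Transform

theorem core (m : ℕ) (hm : 1 ≤ m) :
    ∀ k N, ∀ x : Fin (k+1) → ℝ, Function.Injective x →
      Module.finrank ℝ (LinearMap.ker (gmap k N m x)) ≤ k * m - N ∧
      (N ≤ k * m → degreeLT ℝ (N + m) ≤ LinearMap.range (gmap k N m x)) := by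
  intro k
  induction k with
  | zero =>
    intro N x hx
    have hker : LinearMap.ker (gmap 0 N m x) = ⊥ := by
      rw [eq_bot_iff]
      intro a ha
      rw [LinearMap.mem_ker, gmap_apply, Fin.sum_univ_one] at ha
      have h1 : ((X : ℝ[X]) - C (x 0)) ^ N ≠ 0 := pow_ne_zero _ (X_sub_C_ne_zero (x 0))
      have h2 : (a 0 : ℝ[X]) = 0 := (mul_eq_zero.mp ha).resolve_right h1
      have h3 : a = 0 := funext (fun t => by
        have ht : t = 0 := Fin.fin_one_eq_zero t
        rw [ht]; exact Subtype.ext h2)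
      simp [h3]
    constructor
    · rw [hker]
      simp
    · intro hN
      have hN0 : N = 0 := by omega
      subst hN0
      intro q hq
      have hq' : q ∈ degreeLT ℝ m := by simpa using hq
      refine ⟨Pi.single 0 ⟨q, hq'⟩, ?_⟩
      rw [gmap_single]
      simp
  | succ j ih =>
    intro N x hx
    have hx' : Function.Injective (zz j x) := zz_inj hx
    have part2 : Module.finrank ℝ (LinearMap.ker (gmap (j+1) N m x)) ≤ (j+1) * m - N := by
      by_cases hcase : m ≤ N
      · have h1 := ker_shrink (j := j) (N := N) hm hcase hx
        have h2 := (ih (N - m) (zz j x) hx').1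
        have e1 : (j+1) * m = j * m + m := by ring
        omega
      · push_neg at hcase
        have hsurj := bezout_surj (j+1) N m hm (le_of_lt hcase) (by omega) x hx
        have hle := range_gmap_le (j+1) N m hm x
        have heq : LinearMap.range (gmap (j+1) N m x) = degreeLT ℝ (N + m) :=
          le_antisymm hle hsurj
        have hrn := LinearMap.finrank_range_add_finrank_ker (gmap (j+1) N m x)
        rw [finrank_domain, heq, finrank_degreeLT] at hrn
        have e1 : (j+1+1) * m = (j+1) * m + m := by ring
        omega
    refine ⟨part2, ?_⟩
    intro hN
    by_cases hsm : N ≤ j * m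
    · have hx'' : Function.Injective (x ∘ Fin.castSucc) :=
        hx.comp (Fin.castSucc_injective _)
      have hsub := (ih N (x ∘ Fin.castSucc) hx'').2 hsm
      refine hsub.trans ?_
      rintro _ ⟨D, rfl⟩
      refine ⟨Fin.snoc D 0, ?_⟩
      rw [gmap_apply, gmap_apply, Fin.sum_univ_castSucc]
      simp [Fin.snoc_castSucc]
    · push_neg at hsm
      have hge := finrank_ker_ge (j+1) N m hm x
      have hrn := LinearMap.finrank_range_add_finrank_ker (gmap (j+1) N m x)
      rw [finrank_domain] at hrn
      have hfr : N + m ≤ Module.finrank ℝ (LinearMap.range (gmap (j+1) N m x)) := by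
        have e1 : (j+1+1) * m = (j+1) * m + m := by ring
        omega
      have heq := Submodule.eq_of_le_of_finrank_le (range_gmap_le (j+1) N m hm x)
        (by rw [finrank_degreeLT]; exact hfr)
      rw [heq]

lemma core_finrank (m : ℕ) (hm : 1 ≤ m) (k N : ℕ) (x : Fin (k+1) → ℝ)
    (hx : Function.Injective x) :
    Module.finrank ℝ (LinearMap.ker (gmap k N m x)) = k * m - N ∨
    (k * m ≤ N ∧ Module.finrank ℝ (LinearMap.ker (gmap k N m x)) = 0) := by
  have h1 := (core m hm k N x hx).1
  have h2 := finrank_ker_ge k N m hm x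
  have e1 : (k+1) * m = k * m + m := by ring
  omega

end ConfAux

lemma confMap_eq (k d α : ℕ) (x : Fin (k + 1) → ℝ) :
    confMap k d α x = ConfAux.gmap k (α+1) (d-α) x := rfl

/-- The 'ray' case of the conformality analysis: for a target polynomial `q`
of degree `≤ d`, the solution set `{D : ∑ d_t(x)(x−x_t)^(α+1) = q}` is, when
nonempty, a coset of the kernel of the conformality map, whose dimension is
`max(0, (k+1)(d−α) − (d+1))`; and the solution set is nonempty whenever
`(k+1)(d−α) ≥ d+1`. -/
theorem conformality_affine_solution_set (d α k : ℕ) (hd : 1 ≤ d) (hαd : α < d)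
    (x : Fin (k + 1) → ℝ) (hx : Function.Injective x)
    (q : ℝ[X]) (hq : q.degree ≤ d) :
    (∀ D₀, confMap k d α x D₀ = q →
        {D | confMap k d α x D = q} =
          (fun D => D₀ + D) '' (LinearMap.ker (confMap k d α x) : Set _)) ∧
    ((Module.finrank ℝ (LinearMap.ker (confMap k d α x)) : ℤ) =
        max 0 ((k + 1) * ((d : ℤ) - α) - (d + 1))) ∧
    (d + 1 ≤ (k + 1) * (d - α) → ∃ D, confMap k d α x D = q) := by
  have hm : 1 ≤ d - α := by omega
  refine ⟨?_, ?_, ?_⟩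
  · intro D₀ hD₀
    ext D
    simp only [Set.mem_setOf_eq, Set.mem_image, SetLike.mem_coe, LinearMap.mem_ker]
    constructor
    · intro hD
      refine ⟨D - D₀, ?_, by rw [add_sub_cancel]⟩
      rw [map_sub, hD, hD₀, sub_self]
    · rintro ⟨E, hE, rfl⟩
      rw [map_add, hD₀, hE, add_zero]
  · rw [confMap_eq]
    have hcast : (d : ℤ) - α = ((d - α : ℕ) : ℤ) := by omega
    have hrw : (k + 1) * ((d : ℤ) - α) - (d + 1)
        = ((k * (d - α) : ℕ) : ℤ) - ((α + 1 : ℕ) : ℤ) := by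
      rw [hcast]
      push_cast
      have : ((d : ℤ) - α) = ((d - α : ℕ) : ℤ) := hcast
      ring_nf
      push_cast [Nat.cast_sub (le_of_lt hαd)]
      ring
    rw [hrw]
    rcases ConfAux.core_finrank (d - α) hm k (α + 1) x hx with h | ⟨h1, h2⟩
    · rw [h]
      have hle : α + 1 ≤ k * (d - α) ∨ k * (d - α) ≤ α + 1 := le_total _ _
      omega
    · rw [h2]
      omega
  · intro hbig
    have e1 : (k+1) * (d - α) = k * (d - α) + (d - α) := by ring
    have hsm : α + 1 ≤ k * (d - α) := by omega
    have hmem : q ∈ degreeLT ℝ ((α + 1) + (d - α)) := by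
      rw [mem_degreeLT]
      refine lt_of_le_of_lt hq ?_
      have : ((α + 1) + (d - α) : ℕ) = d + 1 := by omega
      rw [this]
      exact_mod_cast Nat.lt_succ_self d
    obtain ⟨D, hD⟩ := (ConfAux.core (d - α) hm k (α + 1) x hx).2 hsm hmem
    exact ⟨D, by rw [confMap_eq]; exact hD⟩
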